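/- arXiv:2212.08260 — 4 statements merged into one kernel-verified Lean document; each statement's English description precedes it below -/
import Mathlib

section
/- Let E be a real Hilbert space, let κ ∈ (0,1), α ≥ 0, B ≥ 0 and k ∈ ℕ. Let T : E → E be κ-Lipschitz with T z★ = z★, let P : E → E be nonexpansive (1-Lipschitz) with P z★ = x★, and set S = P ∘ T^[k] (the k-fold iterate of T followed by P). Let f : E → ℝ be differentiable with α-Lipschitz gradient. Then for all z, w ∈ E with ‖z − z★‖ ≤ B and ‖w − z★‖ ≤ B, one has |f(S z) − f(S w)| ≤ κ^k (‖∇f(x★)‖ + α κ^k B) ‖z − w‖. -/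
open scoped NNReal

lemma grad_norm_eq {E : Type*} [NormedAddCommGroup E] [InnerProductSpace ℝ E] [CompleteSpace E]
    (f : E → ℝ) (x : E) : ‖gradient f x‖ = ‖fderiv ℝ f x‖ := by
  simp [gradient, LinearIsometryEquiv.norm_map]

lemma lip_on_ball {E : Type*} [NormedAddCommGroup E] [InnerProductSpace ℝ E] [CompleteSpace E]
    (f : E → ℝ) (hf : Differentiable ℝ f) (α : ℝ≥0) (hgrad : LipschitzWith α (gradient f))
    (x₀ : E) (r : ℝ) (u v : E) (hu : ‖u - x₀‖ ≤ r) (hv : ‖v - x₀‖ ≤ r) :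
    |f u - f v| ≤ (‖gradient f x₀‖ + (α : ℝ) * r) * ‖u - v‖ := by
  have hconv : Convex ℝ (Metric.closedBall x₀ r) := convex_closedBall x₀ r
  have bound : ∀ x ∈ Metric.closedBall x₀ r, ‖fderiv ℝ f x‖ ≤ ‖gradient f x₀‖ + (α : ℝ) * r := by
    intro x hx
    rw [← grad_norm_eq]
    have h1 : ‖gradient f x - gradient f x₀‖ ≤ (α : ℝ) * r := by
      calc ‖gradient f x - gradient f x₀‖ ≤ (α : ℝ) * ‖x - x₀‖ := by
            simpa [dist_eq_norm] using hgrad.dist_le_mul x x₀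
        _ ≤ (α : ℝ) * r := by
            have := Metric.mem_closedBall.mp hx
            rw [dist_eq_norm] at this
            exact mul_le_mul_of_nonneg_left this α.coe_nonneg
    calc ‖gradient f x‖ ≤ ‖gradient f x₀‖ + ‖gradient f x - gradient f x₀‖ := by
          simpa using norm_add_le (gradient f x₀) (gradient f x - gradient f x₀)
      _ ≤ ‖gradient f x₀‖ + (α : ℝ) * r := by linarith
  have hum : u ∈ Metric.closedBall x₀ r := Metric.mem_closedBall.mpr (by rwa [dist_eq_norm])
  have hvm : v ∈ Metric.closedBall x₀ r := Metric.mem_closedBall.mpr (by rwa [dist_eq_norm])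
  have := hconv.norm_image_sub_le_of_norm_fderiv_le (fun x _ => hf x) bound hum hvm
  rw [abs_sub_comm, ← Real.norm_eq_abs, norm_sub_rev u v]
  exact this

/-- Lipschitz constant of the loss `L⁰ ∘ 𝒜^k` in the convex case. -/
theorem stmt_0 {E : Type*} [NormedAddCommGroup E] [InnerProductSpace ℝ E] [CompleteSpace E]
    (κ : ℝ≥0) (hκ0 : 0 < κ) (hκ1 : κ < 1) (α : ℝ≥0) (B : ℝ) (hB : 0 ≤ B) (k : ℕ)
    (T P : E → E) (z₀ x₀ : E)
    (hT : LipschitzWith κ T) (hTfix : T z₀ = z₀)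
    (hP : LipschitzWith 1 P) (hPz : P z₀ = x₀)
    (f : E → ℝ) (hf : Differentiable ℝ f) (hgrad : LipschitzWith α (gradient f))
    (z w : E) (hz : ‖z - z₀‖ ≤ B) (hw : ‖w - z₀‖ ≤ B) :
    |f (P (T^[k] z)) - f (P (T^[k] w))| ≤
      (κ : ℝ) ^ k * (‖gradient f x₀‖ + (α : ℝ) * (κ : ℝ) ^ k * B) * ‖z - w‖ := by
  have hTk : LipschitzWith (κ ^ k) (T^[k]) := hT.iterate k
  have hTkfix : T^[k] z₀ = z₀ := Function.iterate_fixed hTfix k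
  have key : ∀ u : E, ‖u - z₀‖ ≤ B → ‖P (T^[k] u) - x₀‖ ≤ (κ:ℝ)^k * B := by
    intro u hu
    calc ‖P (T^[k] u) - x₀‖ = dist (P (T^[k] u)) (P (T^[k] z₀)) := by
          rw [hTkfix, hPz, dist_eq_norm]
      _ ≤ 1 * dist (T^[k] u) (T^[k] z₀) := hP.dist_le_mul _ _
      _ ≤ 1 * ((κ:ℝ)^k * dist u z₀) := by
          have := hTk.dist_le_mul u z₀
          push_cast at this ⊢
          nlinarith [dist_nonneg (x := T^[k] u) (y := T^[k] z₀)]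
      _ ≤ (κ:ℝ)^k * B := by
          rw [one_mul, dist_eq_norm]
          exact mul_le_mul_of_nonneg_left hu (by positivity)
  have hdist : ‖P (T^[k] z) - P (T^[k] w)‖ ≤ (κ:ℝ)^k * ‖z - w‖ := by
    calc ‖P (T^[k] z) - P (T^[k] w)‖ = dist (P (T^[k] z)) (P (T^[k] w)) := (dist_eq_norm _ _).symm
      _ ≤ 1 * dist (T^[k] z) (T^[k] w) := hP.dist_le_mul _ _
      _ ≤ 1 * ((κ:ℝ)^k * dist z w) := by
          have := hTk.dist_le_mul z w
          push_cast at this ⊢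
          nlinarith [dist_nonneg (x := T^[k] z) (y := T^[k] w)]
      _ = (κ:ℝ)^k * ‖z - w‖ := by rw [one_mul, dist_eq_norm]
  have main := lip_on_ball f hf α hgrad x₀ ((κ:ℝ)^k * B)
    (P (T^[k] z)) (P (T^[k] w)) (key z hz) (key w hw)
  have hC : 0 ≤ ‖gradient f x₀‖ + (α:ℝ) * ((κ:ℝ)^k * B) := by positivity
  calc |f (P (T^[k] z)) - f (P (T^[k] w))|
      ≤ (‖gradient f x₀‖ + (α:ℝ) * ((κ:ℝ)^k * B)) * ‖P (T^[k] z) - P (T^[k] w)‖ := main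
    _ ≤ (‖gradient f x₀‖ + (α:ℝ) * ((κ:ℝ)^k * B)) * ((κ:ℝ)^k * ‖z - w‖) :=
        mul_le_mul_of_nonneg_left hdist hC
    _ = (κ : ℝ) ^ k * (‖gradient f x₀‖ + (α : ℝ) * (κ : ℝ) ^ k * B) * ‖z - w‖ := by ring
end

section
/- Let E be a real Hilbert space, ν ∈ (0,1), and let T : E → E be ν-averaged, i.e. T = (1−ν)·id + ν·G for some nonexpansive (1-Lipschitz) map G : E → E. Let z★ be a fixed point of T (T z★ = z★). Then for every z ∈ E and every k ∈ ℕ, ‖T^[k+1] z − T^[k] z‖ ≤ ‖z − z★‖ / √((k+1) ν (1−ν)). -/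
lemma combo_identity {E : Type*} [NormedAddCommGroup E] [InnerProductSpace ℝ E]
    (ν : ℝ) (a b : E) :
    ‖(1 - ν) • a + ν • b‖ ^ 2
      = (1 - ν) * ‖a‖ ^ 2 + ν * ‖b‖ ^ 2 - ν * (1 - ν) * ‖a - b‖ ^ 2 := by
  have h1 := norm_add_sq_real ((1 - ν) • a) (ν • b)
  have h2 := norm_sub_sq_real a b
  simp only [inner_smul_left, inner_smul_right, norm_smul, RCLike.conj_to_real,
    Real.norm_eq_abs, mul_pow, sq_abs] at h1
  nlinarith [h1, h2]

/-- `O(1/√k)` fixed-point-residual rate for the iteration of a ν-averaged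
operator. -/
theorem stmt_4 {E : Type*} [NormedAddCommGroup E] [InnerProductSpace ℝ E] [CompleteSpace E]
    (ν : ℝ) (hν0 : 0 < ν) (hν1 : ν < 1) (T G : E → E)
    (hG : LipschitzWith 1 G) (hTG : ∀ x, T x = (1 - ν) • x + ν • G x)
    (z₀ : E) (hfix : T z₀ = z₀) (z : E) (k : ℕ) :
    ‖T^[k + 1] z - T^[k] z‖ ≤ ‖z - z₀‖ / Real.sqrt ((k + 1 : ℝ) * ν * (1 - ν)) := by
  have hν1' : 0 < 1 - ν := by linarith
  -- G z₀ = z₀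
  have hGfix : G z₀ = z₀ := by
    have h := hfix
    rw [hTG] at h
    have : ν • G z₀ = ν • z₀ := by
      have h2 : ν • G z₀ = z₀ - (1 - ν) • z₀ := eq_sub_of_add_eq' h
      rw [h2, sub_smul, one_smul]; abel
    exact smul_right_injective E (ne_of_gt hν0) this
  -- T is nonexpansive
  have hT : ∀ x y : E, ‖T x - T y‖ ≤ ‖x - y‖ := by
    intro x y
    rw [hTG, hTG]
    have : (1 - ν) • x + ν • G x - ((1 - ν) • y + ν • G y)
        = (1 - ν) • (x - y) + ν • (G x - G y) := by
      simp [smul_sub]; abel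
    rw [this]
    calc ‖(1 - ν) • (x - y) + ν • (G x - G y)‖
        ≤ ‖(1 - ν) • (x - y)‖ + ‖ν • (G x - G y)‖ := norm_add_le _ _
      _ = (1 - ν) * ‖x - y‖ + ν * ‖G x - G y‖ := by
          rw [norm_smul, norm_smul, Real.norm_eq_abs, Real.norm_eq_abs,
            abs_of_pos hν1', abs_of_pos hν0]
      _ ≤ (1 - ν) * ‖x - y‖ + ν * ‖x - y‖ := by
          have := hG.dist_le_mul x y
          simp [dist_eq_norm] at this
          nlinarith
      _ = ‖x - y‖ := by ring
  -- key one-step inequality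
  have key : ∀ x : E, ‖T x - z₀‖ ^ 2 + ((1 - ν) / ν) * ‖T x - x‖ ^ 2 ≤ ‖x - z₀‖ ^ 2 := by
    intro x
    have hTx : T x - z₀ = (1 - ν) • (x - z₀) + ν • (G x - z₀) := by
      rw [hTG]
      nth_rewrite 1 [show z₀ = (1 - ν) • z₀ + ν • z₀ by rw [sub_smul, one_smul]; abel]
      simp [smul_sub]; abel
    have hid := combo_identity ν (x - z₀) (G x - z₀)
    rw [← hTx] at hid
    have hdiff : (x - z₀) - (G x - z₀) = x - G x := by abel
    rw [hdiff] at hid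
    have hGle : ‖G x - z₀‖ ≤ ‖x - z₀‖ := by
      have := hG.dist_le_mul x z₀
      simp [dist_eq_norm, hGfix] at this
      exact this
    have hTxx : ‖T x - x‖ = ν * ‖x - G x‖ := by
      have : T x - x = ν • (G x - x) := by
        rw [hTG]
        rw [show (1 - ν) • x + ν • G x - x = ν • G x - ν • x by
          rw [sub_smul, one_smul]; abel]
        rw [smul_sub]
      rw [this, norm_smul, Real.norm_eq_abs, abs_of_pos hν0, ← norm_neg]
      congr 1; abel
    have h2 : ((1 - ν) / ν) * ‖T x - x‖ ^ 2 = ν * (1 - ν) * ‖x - G x‖ ^ 2 := by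
      rw [hTxx]; field_simp
    rw [h2, hid]
    nlinarith [pow_le_pow_left₀ (norm_nonneg (G x - z₀)) hGle 2, hν0]
  set r : ℕ → ℝ := fun i => ‖T^[i + 1] z - T^[i] z‖ with hr
  set d : ℕ → ℝ := fun i => ‖T^[i] z - z₀‖ ^ 2 with hd
  have hstep : ∀ i, d (i + 1) + ((1 - ν) / ν) * r i ^ 2 ≤ d i := by
    intro i
    have := key (T^[i] z)
    simpa [hd, hr, Function.iterate_succ_apply'] using this
  have hrmono : ∀ i, r (i + 1) ≤ r i := by
    intro i
    have := hT (T^[i + 1] z) (T^[i] z)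
    simpa [hr, Function.iterate_succ_apply'] using this
  have hrle : ∀ i ≤ k, r k ≤ r i := by
    intro i hi
    have : ∀ n, r (i + n) ≤ r i := by
      intro n; induction n with
      | zero => simp
      | succ n ih => calc r (i + (n + 1)) ≤ r (i + n) := hrmono _
                       _ ≤ r i := ih
    have h := this (k - i)
    rwa [Nat.add_sub_cancel' hi] at h
  have hsum : ∀ m : ℕ, ∑ i ∈ Finset.range (m + 1), ((1 - ν) / ν) * r i ^ 2 ≤ d 0 := by
    intro m
    have htel : ∀ m : ℕ, ∑ i ∈ Finset.range m, ((1 - ν) / ν) * r i ^ 2 ≤ d 0 - d m := by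
      intro m; induction m with
      | zero => simp
      | succ m ih =>
        rw [Finset.sum_range_succ]
        have := hstep m
        linarith
    have := htel (m + 1)
    have hd0 : 0 ≤ d (m + 1) := by positivity
    linarith
  -- lower bound the sum
  have hc : 0 < (1 - ν) / ν := div_pos hν1' hν0
  have hlow : ((k : ℝ) + 1) * (((1 - ν) / ν) * r k ^ 2) ≤ d 0 := by
    have h1 : ∀ i ∈ Finset.range (k + 1), ((1 - ν) / ν) * r k ^ 2 ≤ ((1 - ν) / ν) * r i ^ 2 := by
      intro i hi
      have hik : i ≤ k := Nat.lt_succ_iff.mp (Finset.mem_range.mp hi)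
      exact mul_le_mul_of_nonneg_left
        (pow_le_pow_left₀ (norm_nonneg _) (hrle i hik) 2) hc.le
    calc ((k : ℝ) + 1) * (((1 - ν) / ν) * r k ^ 2)
        = ∑ _i ∈ Finset.range (k + 1), ((1 - ν) / ν) * r k ^ 2 := by
          rw [Finset.sum_const, Finset.card_range]; push_cast; ring
      _ ≤ ∑ i ∈ Finset.range (k + 1), ((1 - ν) / ν) * r i ^ 2 := Finset.sum_le_sum h1
      _ ≤ d 0 := hsum k
  -- conclude
  have hA : 0 < ((k : ℝ) + 1) * ν * (1 - ν) := by positivity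
  have hkey2 : r k ^ 2 * (((k : ℝ) + 1) * ν * (1 - ν)) ≤ d 0 := by
    have hrk : 0 ≤ r k ^ 2 := sq_nonneg _
    have hk1 : (0:ℝ) < (k : ℝ) + 1 := by positivity
    have hcc : ν * (1 - ν) ≤ (1 - ν) / ν := by
      rw [le_div_iff₀ hν0]
      nlinarith [mul_nonneg (mul_nonneg hν1'.le hν1'.le) (by linarith : (0:ℝ) ≤ 1 + ν)]
    have hm := mul_le_mul_of_nonneg_left hcc (mul_nonneg hrk hk1.le)
    nlinarith [hlow, hm]
  have hd0z : d 0 = ‖z - z₀‖ ^ 2 := by simp [hd]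
  rw [hd0z] at hkey2
  have hq : r k ^ 2 ≤ ‖z - z₀‖ ^ 2 / (((k : ℝ) + 1) * ν * (1 - ν)) :=
    (le_div_iff₀ hA).mpr hkey2
  have hfin : r k ≤ ‖z - z₀‖ / Real.sqrt (((k : ℝ) + 1) * ν * (1 - ν)) := by
    calc r k = Real.sqrt (r k ^ 2) := (Real.sqrt_sq (norm_nonneg _)).symm
      _ ≤ Real.sqrt (‖z - z₀‖ ^ 2 / (((k : ℝ) + 1) * ν * (1 - ν))) := Real.sqrt_le_sqrt hq
      _ = ‖z - z₀‖ / Real.sqrt (((k : ℝ) + 1) * ν * (1 - ν)) := by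
          rw [Real.sqrt_div (sq_nonneg _), Real.sqrt_sq (norm_nonneg _)]
  simpa [hr] using hfin
end

section
/- Let E be a finite-dimensional real inner product space, ν ∈ (0,1), k ∈ ℕ, and let T : E → E be ν-averaged, i.e. T = (1−ν)·id + ν·G for some nonexpansive (1-Lipschitz) map G : E → E. Let Z ⊆ E be a compact set containing all fixed points of T, and assume T has at least one fixed point. Define the loss L(z) = ‖T(T^[k] z) − T^[k] z‖. Suppose z̄ ∈ Z attains the maximum of L over Z, and let z̄^∞ denote the limit of the sequence n ↦ T^[n] z̄ (which exists). Then for all z, w ∈ Z, |L(z) − L(w)| ≤ (1/√((k+1) ν (1−ν))) ‖z̄ − z̄^∞‖. -/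
lemma key_step_stmt6 {E : Type*} [NormedAddCommGroup E] [InnerProductSpace ℝ E]
    (ν : ℝ) (hν0 : 0 < ν) (hν1 : ν < 1) (T G : E → E)
    (hG : LipschitzWith 1 G) (hTG : ∀ x, T x = (1 - ν) • x + ν • G x)
    (p : E) (hp : G p = p) (x : E) :
    ‖T x - p‖^2 + ν * (1 - ν) * ‖T x - x‖^2 ≤ ‖x - p‖^2 := by
  set a := x - p with ha
  set b := G x - p with hb
  have hBA : ‖b‖ ≤ ‖a‖ := by
    have := hG.dist_le_mul x p
    simpa [dist_eq_norm, hp, ha, hb] using this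
  have h1 : T x - p = (1 - ν) • a + ν • b := by rw [hTG, ha, hb]; module
  have h2 : T x - x = ν • (b - a) := by rw [hTG, ha, hb]; module
  have e1 : ‖T x - p‖^2 = (1-ν)^2*‖a‖^2 + 2*((1-ν)*ν)*(inner ℝ a b : ℝ) + ν^2*‖b‖^2 := by
    rw [h1, norm_add_sq_real, norm_smul, norm_smul, real_inner_smul_left, real_inner_smul_right]
    rw [Real.norm_eq_abs, Real.norm_eq_abs, abs_of_nonneg hν0.le,
      abs_of_nonneg (by linarith : (0:ℝ) ≤ 1-ν)]
    ring
  have e2 : ‖T x - x‖^2 = ν^2 * (‖b‖^2 - 2*(inner ℝ a b : ℝ) + ‖a‖^2) := by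
    rw [h2, norm_smul, Real.norm_eq_abs, abs_of_nonneg hν0.le, mul_pow, norm_sub_sq_real,
      real_inner_comm b a]
  have hD : (0:ℝ) ≤ ‖a‖^2 - 2*(inner ℝ a b : ℝ) + ‖b‖^2 := by
    have := norm_sub_sq_real a b
    nlinarith [sq_nonneg ‖a - b‖]
  rw [e1, e2]
  nlinarith [mul_nonneg (mul_nonneg (mul_nonneg hν0.le (by linarith : (0:ℝ) ≤ 1-ν))
      (by nlinarith : (0:ℝ) ≤ 1 - ν^2)) hD,
    mul_nonneg hν0.le (mul_nonneg (sub_nonneg.2 hBA) (by positivity : (0:ℝ) ≤ ‖a‖+‖b‖)),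
    norm_nonneg a, norm_nonneg b]

lemma key_iter_stmt6 {E : Type*} [NormedAddCommGroup E] [InnerProductSpace ℝ E]
    (ν : ℝ) (hν0 : 0 < ν) (hν1 : ν < 1) (T G : E → E)
    (hG : LipschitzWith 1 G) (hTG : ∀ x, T x = (1 - ν) • x + ν • G x)
    (p : E) (hp : G p = p) (z0 : E) (n : ℕ) :
    ((n:ℝ)+1) * (ν*(1-ν)) * ‖T (T^[n] z0) - T^[n] z0‖^2 + ‖T^[n+1] z0 - p‖^2
      ≤ ‖z0 - p‖^2 := by
  have hTne : ∀ u v : E, ‖T u - T v‖ ≤ ‖u - v‖ := by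
    intro u v
    have h1 : T u - T v = (1-ν) • (u - v) + ν • (G u - G v) := by rw [hTG, hTG]; module
    have h2 : ‖G u - G v‖ ≤ ‖u - v‖ := by
      have := hG.dist_le_mul u v; simpa [dist_eq_norm] using this
    calc ‖T u - T v‖ ≤ ‖(1-ν) • (u - v)‖ + ‖ν • (G u - G v)‖ := by
            rw [h1]; exact norm_add_le _ _
      _ = (1-ν) * ‖u - v‖ + ν * ‖G u - G v‖ := by
            rw [norm_smul, norm_smul, Real.norm_eq_abs, Real.norm_eq_abs,
              abs_of_nonneg hν0.le, abs_of_nonneg (by linarith : (0:ℝ) ≤ 1-ν)]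
      _ ≤ ‖u - v‖ := by nlinarith
  induction n with
  | zero =>
    have := key_step_stmt6 ν hν0 hν1 T G hG hTG p hp z0
    simpa using by linarith
  | succ n ih =>
    have hit : T^[n+1] z0 = T (T^[n] z0) := Function.iterate_succ_apply' T n z0
    have hit2 : T^[n+2] z0 = T (T^[n+1] z0) := Function.iterate_succ_apply' T (n+1) z0
    have hks := key_step_stmt6 ν hν0 hν1 T G hG hTG p hp (T^[n+1] z0)
    have hmono : ‖T (T^[n+1] z0) - T^[n+1] z0‖ ≤ ‖T (T^[n] z0) - T^[n] z0‖ := by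
      rw [hit]; exact hTne _ _
    have hmono2 : ‖T (T^[n+1] z0) - T^[n+1] z0‖^2 ≤ ‖T (T^[n] z0) - T^[n] z0‖^2 :=
      pow_le_pow_left₀ (norm_nonneg _) hmono 2
    have hc : (0:ℝ) ≤ ν*(1-ν) := by nlinarith
    have hn : (0:ℝ) ≤ (n:ℝ) := Nat.cast_nonneg n
    rw [hit2]
    push_cast
    nlinarith [mul_le_mul_of_nonneg_left hmono2 (mul_nonneg (by linarith : (0:ℝ) ≤ (n:ℝ)+1) hc)]

/-- non-strongly-convex case (new version): Lipschitz-like bound on the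
fixed-point-residual loss via a maximizer over the compact set `Z`. -/
theorem stmt_6 {E : Type*} [NormedAddCommGroup E] [InnerProductSpace ℝ E]
    [FiniteDimensional ℝ E]
    (ν : ℝ) (hν0 : 0 < ν) (hν1 : ν < 1) (k : ℕ) (T G : E → E)
    (hG : LipschitzWith 1 G) (hTG : ∀ x, T x = (1 - ν) • x + ν • G x)
    (hfix : ∃ z, T z = z)
    (Z : Set E) (hZc : IsCompact Z) (hZfix : ∀ z, T z = z → z ∈ Z)
    (L : E → ℝ) (hL : ∀ z, L z = ‖T (T^[k] z) - T^[k] z‖)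
    (zbar : E) (hzbar : zbar ∈ Z) (hmax : ∀ z ∈ Z, L z ≤ L zbar)
    (zinf : E) (hlim : Filter.Tendsto (fun n => T^[n] zbar) Filter.atTop (nhds zinf))
    (z w : E) (hz : z ∈ Z) (hw : w ∈ Z) :
    |L z - L w| ≤ (1 / Real.sqrt ((k + 1 : ℝ) * ν * (1 - ν))) * ‖zbar - zinf‖ := by
  -- T is continuous
  have hTcont : Continuous T := by
    have : Continuous fun x => (1 - ν) • x + ν • G x := by
      exact ((continuous_id.const_smul _).add (hG.continuous.const_smul _))
    exact this.congr fun x => (hTG x).symm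
  -- zinf is a fixed point of T
  have hTfix : T zinf = zinf := by
    have h1 : Filter.Tendsto (fun n => T^[n+1] zbar) Filter.atTop (nhds zinf) :=
      hlim.comp (Filter.tendsto_add_atTop_nat 1)
    have h2 : Filter.Tendsto (fun n => T (T^[n] zbar)) Filter.atTop (nhds (T zinf)) :=
      (hTcont.tendsto zinf).comp hlim
    have h3 : (fun n => T^[n+1] zbar) = fun n => T (T^[n] zbar) := by
      funext n; exact Function.iterate_succ_apply' T n zbar
    rw [h3] at h1
    exact tendsto_nhds_unique h2 h1
  have hGfix : G zinf = zinf := by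
    have h := hTG zinf
    rw [hTfix] at h
    have : ν • (G zinf - zinf) = 0 := by
      have : (1 - ν) • zinf + ν • G zinf - zinf = 0 := by rw [← h]; abel
      rw [← this]; module
    rcases smul_eq_zero.mp this with h' | h'
    · exact absurd h' (ne_of_gt hν0)
    · have := sub_eq_zero.mp h'; exact this
  -- key inequality at n = k, z0 = zbar
  have hkey := key_iter_stmt6 ν hν0 hν1 T G hG hTG zinf hGfix zbar k
  set N := ‖zbar - zinf‖ with hN
  have hNn : 0 ≤ N := norm_nonneg _
  have hLzbar : L zbar = ‖T (T^[k] zbar) - T^[k] zbar‖ := hL zbar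
  have hLz0 : 0 ≤ L zbar := by rw [hLzbar]; exact norm_nonneg _
  have hkey2 : ((k:ℝ)+1) * (ν*(1-ν)) * (L zbar)^2 ≤ N^2 := by
    rw [hLzbar]
    nlinarith [sq_nonneg ‖T^[k+1] zbar - zinf‖]
  set s := Real.sqrt ((k + 1 : ℝ) * ν * (1 - ν)) with hs
  have hcpos : (0:ℝ) < (k + 1 : ℝ) * ν * (1 - ν) := by
    have h1ν : (0:ℝ) < 1 - ν := by linarith
    positivity
  have hspos : 0 < s := Real.sqrt_pos.mpr hcpos
  have hssq : s^2 = (k + 1 : ℝ) * ν * (1 - ν) := Real.sq_sqrt hcpos.le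
  -- L zbar ≤ N / s
  have hbound : L zbar ≤ (1 / s) * N := by
    rw [one_div_mul_eq_div, le_div_iff₀ hspos]
    nlinarith [hkey2, hssq, mul_nonneg hLz0 hspos.le]
  -- conclude
  have hzb : L z ≤ L zbar := hmax z hz
  have hwb : L w ≤ L zbar := hmax w hw
  have hzn : 0 ≤ L z := by rw [hL]; exact norm_nonneg _
  have hwn : 0 ≤ L w := by rw [hL]; exact norm_nonneg _
  rw [abs_sub_le_iff]
  constructor <;> linarith
end

section
/- Let E be a finite-dimensional real inner product space, ν ∈ (0,1), k ∈ ℕ, and let T : E → E be ν-averaged, i.e. T = (1−ν)·id + ν·G for some nonexpansive (1-Lipschitz) map G : E → E, with at least one fixed point. Let Z ⊆ E be a nonempty compact set containing all fixed points of T, and define L(z) = ‖T(T^[k] z) − T^[k] z‖. Then there exist z̄, w̄ ∈ Z such that (z̄, w̄) maximizes (z, w) ↦ |L(z) − L(w)| over Z × Z and |L(z̄) − L(w̄)| ≤ (1/√((k+1) ν (1−ν))) ‖z̄ − w̄‖. -/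
open Function

private lemma convex_norm_sq {E : Type*} [NormedAddCommGroup E] [InnerProductSpace ℝ E]
    (t : ℝ) (a b : E) :
    ‖(1 - t) • a + t • b‖ ^ 2
      = (1 - t) * ‖a‖ ^ 2 + t * ‖b‖ ^ 2 - t * (1 - t) * ‖a - b‖ ^ 2 := by
  have h1 := norm_add_sq_real ((1 - t) • a) (t • b)
  have h2 := norm_sub_sq_real a b
  simp only [norm_smul, real_inner_smul_left, real_inner_smul_right, mul_pow, sq_abs,
    Real.norm_eq_abs] at h1 h2 ⊢
  rw [h1, h2]; ring

/-- non-strongly-convex case: there is a maximizing pair of the loss gap on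
`Z × Z` at which a Lipschitz-like inequality holds. -/
theorem stmt_7 {E : Type*} [NormedAddCommGroup E] [InnerProductSpace ℝ E]
    [FiniteDimensional ℝ E]
    (ν : ℝ) (hν0 : 0 < ν) (hν1 : ν < 1) (k : ℕ) (T G : E → E)
    (hG : LipschitzWith 1 G) (hTG : ∀ x, T x = (1 - ν) • x + ν • G x)
    (hfix : ∃ z, T z = z)
    (Z : Set E) (hZne : Z.Nonempty) (hZc : IsCompact Z) (hZfix : ∀ z, T z = z → z ∈ Z)
    (L : E → ℝ) (hL : ∀ z, L z = ‖T (T^[k] z) - T^[k] z‖) :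
    ∃ zbar ∈ Z, ∃ wbar ∈ Z,
      (∀ z ∈ Z, ∀ w ∈ Z, |L z - L w| ≤ |L zbar - L wbar|) ∧
      |L zbar - L wbar| ≤
        (1 / Real.sqrt ((k + 1 : ℝ) * ν * (1 - ν))) * ‖zbar - wbar‖ := by
  obtain ⟨zs, hzs⟩ := hfix
  have hν1' : 0 < 1 - ν := by linarith
  -- G is 1-Lipschitz in norm form
  have hGlip : ∀ x y : E, ‖G x - G y‖ ≤ ‖x - y‖ := by
    intro x y
    have := hG.dist_le_mul x y
    simpa [dist_eq_norm] using this
  -- T is nonexpansive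
  have hTlip : ∀ x y : E, ‖T x - T y‖ ≤ ‖x - y‖ := by
    intro x y
    have h : T x - T y = (1 - ν) • (x - y) + ν • (G x - G y) := by
      rw [hTG x, hTG y]; module
    calc ‖T x - T y‖ ≤ ‖(1 - ν) • (x - y)‖ + ‖ν • (G x - G y)‖ := by
          rw [h]; exact norm_add_le _ _
      _ = (1 - ν) * ‖x - y‖ + ν * ‖G x - G y‖ := by
          rw [norm_smul, norm_smul, Real.norm_eq_abs, Real.norm_eq_abs,
            abs_of_pos hν1', abs_of_pos hν0]
      _ ≤ (1 - ν) * ‖x - y‖ + ν * ‖x - y‖ := by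
          have := hGlip x y; nlinarith
      _ = ‖x - y‖ := by ring
  -- G fixes zs
  have hGzs : G zs = zs := by
    have h := hTG zs
    rw [hzs] at h
    have : ν • (G zs - zs) = 0 := by
      have : (1 - ν) • zs + ν • G zs - zs = 0 := by rw [← h]; abel
      rw [smul_sub]; rw [← this]; module
    have h2 : G zs - zs = 0 := by
      rcases smul_eq_zero.mp this with h' | h'
      · exact absurd h' hν0.ne'
      · exact h'
    have := sub_eq_zero.mp h2
    exact this
  -- key one-step inequality
  have step : ∀ x : E, ((1 - ν) / ν) * ‖x - T x‖ ^ 2 + ‖T x - zs‖ ^ 2 ≤ ‖x - zs‖ ^ 2 := by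
    intro x
    have hTx : T x - zs = (1 - ν) • (x - zs) + ν • (G x - zs) := by
      rw [hTG x, ← hGzs]; module
    have hid := convex_norm_sq ν (x - zs) (G x - zs)
    rw [← hTx] at hid
    have hdiff : (x - zs) - (G x - zs) = x - G x := by abel
    rw [hdiff] at hid
    have hres : x - T x = ν • (x - G x) := by rw [hTG x]; module
    have hres2 : ‖x - T x‖ ^ 2 = ν ^ 2 * ‖x - G x‖ ^ 2 := by
      rw [hres, norm_smul, Real.norm_eq_abs, mul_pow, sq_abs]
    have hGle : ‖G x - zs‖ ≤ ‖x - zs‖ := by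
      have := hGlip x zs; rwa [hGzs] at this
    have hnn : (0:ℝ) ≤ ‖x - zs‖ := norm_nonneg _
    have hnn2 : (0:ℝ) ≤ ‖G x - zs‖ := norm_nonneg _
    have hGle2 : ‖G x - zs‖ ^ 2 ≤ ‖x - zs‖ ^ 2 := by nlinarith
    have hd : ((1 - ν) / ν) * (ν ^ 2 * ‖x - G x‖ ^ 2) = ν * (1 - ν) * ‖x - G x‖ ^ 2 := by
      field_simp
    rw [hres2, hd, hid]
    nlinarith
  -- residual is nonincreasing
  have mono : ∀ x : E, ‖T x - T (T x)‖ ≤ ‖x - T x‖ := fun x => hTlip x (T x)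
  -- summed inequality
  have sum : ∀ z : E, ∀ n : ℕ,
      ((1 - ν) / ν) * (n + 1) * ‖T^[n] z - T (T^[n] z)‖ ^ 2 + ‖T^[n+1] z - zs‖ ^ 2
        ≤ ‖z - zs‖ ^ 2 := by
    intro z n
    induction n with
    | zero =>
      simpa using step z
    | succ n ih =>
      have hiter : T^[n+1] z = T (T^[n] z) := Function.iterate_succ_apply' T n z
      have hiter2 : T^[n+2] z = T (T^[n+1] z) := Function.iterate_succ_apply' T (n+1) z
      have hstep := step (T^[n+1] z)
      have hmono : ‖T^[n+1] z - T (T^[n+1] z)‖ ≤ ‖T^[n] z - T (T^[n] z)‖ := by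
        rw [hiter]; exact mono (T^[n] z)
      have hc : (0:ℝ) ≤ (1 - ν) / ν := le_of_lt (div_pos hν1' hν0)
      have hmono2 : ‖T^[n+1] z - T (T^[n+1] z)‖ ^ 2 ≤ ‖T^[n] z - T (T^[n] z)‖ ^ 2 := by
        have := norm_nonneg (T^[n+1] z - T (T^[n+1] z)); nlinarith
      rw [hiter2]
      push_cast
      nlinarith [ih, hstep, mul_le_mul_of_nonneg_left hmono2 hc,
        mul_nonneg hc (sq_nonneg ‖T^[n+1] z - T (T^[n+1] z)‖)]
  -- pointwise bound on L
  have hLnn : ∀ z, 0 ≤ L z := fun z => by rw [hL z]; exact norm_nonneg _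
  have hconst_pos : (0:ℝ) < (k + 1 : ℝ) * ν * (1 - ν) := by positivity
  have hLbound : ∀ z : E,
      L z ≤ (1 / Real.sqrt ((k + 1 : ℝ) * ν * (1 - ν))) * ‖z - zs‖ := by
    intro z
    have hsum := sum z k
    have hsq : ((1 - ν) / ν) * (k + 1) * (L z) ^ 2 ≤ ‖z - zs‖ ^ 2 := by
      rw [hL z, norm_sub_rev]
      nlinarith [hsum, sq_nonneg ‖T^[k+1] z - zs‖]
    -- (L z)^2 ≤ ‖z - zs‖^2 * ν / ((1-ν)(k+1)) ≤ ‖z-zs‖^2 / ((k+1) ν (1-ν))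
    have h1 : (L z) ^ 2 ≤ ‖z - zs‖ ^ 2 / ((k + 1 : ℝ) * ν * (1 - ν)) := by
      rw [le_div_iff₀ hconst_pos]
      have hν2 : ν * ν ≤ 1 := by nlinarith
      have hk : (0:ℝ) ≤ (k + 1 : ℝ) := by positivity
      have hLsq : (0:ℝ) ≤ (L z)^2 := sq_nonneg _
      -- (k+1) ν (1-ν) ≤ (1-ν)/ν * (k+1) since ν² ≤ 1
      have key : (k + 1 : ℝ) * ν * (1 - ν) ≤ ((1 - ν) / ν) * (k + 1) := by
        rw [div_mul_eq_mul_div, le_div_iff₀ hν0]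
        nlinarith
      nlinarith [mul_le_mul_of_nonneg_right key hLsq]
    have hRnn : (0:ℝ) ≤ ‖z - zs‖ := norm_nonneg _
    have hs := Real.sqrt_le_sqrt h1
    rw [Real.sqrt_sq (hLnn z)] at hs
    calc L z ≤ Real.sqrt (‖z - zs‖ ^ 2 / ((k + 1 : ℝ) * ν * (1 - ν))) := hs
      _ = (1 / Real.sqrt ((k + 1 : ℝ) * ν * (1 - ν))) * ‖z - zs‖ := by
          rw [Real.sqrt_div (sq_nonneg _), Real.sqrt_sq hRnn, div_eq_mul_inv, one_div,
            mul_comm]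
  -- continuity of L
  have hLcont : Continuous L := by
    have hTc : Continuous T := by
      have : LipschitzWith 1 T := by
        apply LipschitzWith.of_dist_le_mul
        intro x y
        simpa [dist_eq_norm] using hTlip x y
      exact this.continuous
    have : Continuous fun z => ‖T (T^[k] z) - T^[k] z‖ := by
      have hit : Continuous (T^[k]) := hTc.iterate k
      exact ((hTc.comp hit).sub hit).norm
    have hfe : L = fun z => ‖T (T^[k] z) - T^[k] z‖ := funext hL
    rw [hfe]; exact this
  obtain ⟨zbar, hzbarZ, hmax⟩ := hZc.exists_isMaxOn hZne hLcont.continuousOn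
  have hzsZ : zs ∈ Z := hZfix zs hzs
  have hLzs : L zs = 0 := by
    rw [hL zs, Function.iterate_fixed hzs k, hzs, sub_self, norm_zero]
  refine ⟨zbar, hzbarZ, zs, hzsZ, ?_, ?_⟩
  · intro z hz w hw
    have h1 : L z ≤ L zbar := hmax hz
    have h2 : L w ≤ L zbar := hmax hw
    rw [hLzs, sub_zero, abs_of_nonneg (hLnn zbar), abs_sub_le_iff]
    constructor <;> [linarith [hLnn w]; linarith [hLnn z]]
  · rw [hLzs, sub_zero, abs_of_nonneg (hLnn zbar)]
    exact hLbound zbar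
end
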